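/- Reversibility for exponential weights: let α₁, α₂ > 0 and let μ be the product probability measure on [0,∞)³ of the exponential distributions with rates α₁, α₂ and α₁ + α₂ (densities α e^{−αx}). Then the pushforward of μ under the map R(r,s,t) = (t + (r−s)⁺, t + (s−r)⁺, min(r,s)) equals μ, i.e. R_*μ = μ. -/
import Mathlib


open MeasureTheory

open ENNReal

/-- The exponential distribution with rate `α`: the measure on `ℝ` with density
`α e^{−αx}` on `[0,∞)` and zero on `(−∞,0)`. -/
noncomputable def expMeasure (α : ℝ) : Measure ℝ :=
  volume.withDensity (fun x => ENNReal.ofReal (if 0 ≤ x then α * Real.exp (-α * x) else 0))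

/-- The map `R(r,s,t) = (t + (r−s)⁺, t + (s−r)⁺, min(r,s))`. -/
noncomputable def Rmap (p : ℝ × ℝ × ℝ) : ℝ × ℝ × ℝ :=
  (p.2.2 + max (p.1 - p.2.1) 0, p.2.2 + max (p.2.1 - p.1) 0, min p.1 p.2.1)

namespace ExpRev

/-- the real density of the exponential distribution -/
noncomputable def dens (α x : ℝ) : ℝ := if 0 ≤ x then α * Real.exp (-α * x) else 0

lemma expMeasure_eq (α : ℝ) :
    expMeasure α = volume.withDensity (fun x => ENNReal.ofReal (dens α x)) := rfl

lemma measurable_dens (α : ℝ) : Measurable fun x : ℝ => ENNReal.ofReal (dens α x) := by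
  refine Measurable.ennreal_ofReal ?_
  exact Measurable.ite measurableSet_Ici (by fun_prop) measurable_const

lemma isProbability_expMeasure {α : ℝ} (hα : 0 < α) :
    IsProbabilityMeasure (expMeasure α) := by
  constructor
  rw [expMeasure_eq, withDensity_apply _ MeasurableSet.univ, Measure.restrict_univ]
  have : ∀ x : ℝ, ENNReal.ofReal (dens α x) = ProbabilityTheory.exponentialPDF α x := by
    intro x
    rw [ProbabilityTheory.exponentialPDF_eq, dens, neg_mul]
  simp_rw [this]
  exact ProbabilityTheory.lintegral_exponentialPDF_eq_one hα

lemma continuous_Rmap : Continuous Rmap := by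
  unfold Rmap; fun_prop

lemma measurable_Rmap : Measurable Rmap := continuous_Rmap.measurable

/-- the first affine piece of `Rmap` -/
def Amap (p : ℝ × ℝ × ℝ) : ℝ × ℝ × ℝ := (p.1 - p.2.1 + p.2.2, p.2.2, p.2.1)

/-- the second affine piece of `Rmap` -/
def Bmap (p : ℝ × ℝ × ℝ) : ℝ × ℝ × ℝ := (p.2.2, p.2.1 - p.1 + p.2.2, p.1)

lemma mpA : MeasurePreserving Amap (volume : Measure (ℝ × ℝ × ℝ)) volume := by
  have assoc : MeasurePreserving (MeasurableEquiv.prodAssoc : (ℝ × ℝ) × ℝ ≃ᵐ ℝ × ℝ × ℝ)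
      volume volume := volume_preserving_prodAssoc
  have assocS := MeasurePreserving.symm MeasurableEquiv.prodAssoc assoc
  have c2 := ((measurePreserving_sub_prod (volume : Measure ℝ) volume).prod
      (MeasurePreserving.id (volume : Measure ℝ))).comp assocS
  have c3 := assoc.comp c2
  have c4 := ((MeasurePreserving.id (volume : Measure ℝ)).prod
      (Measure.measurePreserving_swap (μ := (volume : Measure ℝ)) (ν := volume))).comp c3
  have c5 := assocS.comp c4
  have c6 := ((measurePreserving_add_prod (volume : Measure ℝ) volume).prod
      (MeasurePreserving.id (volume : Measure ℝ))).comp c5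
  have c7 := assoc.comp c6
  exact c7

lemma mpSigma : MeasurePreserving (fun p : ℝ × ℝ × ℝ => (p.2.1, p.1, p.2.2))
    (volume : Measure (ℝ × ℝ × ℝ)) volume := by
  have assoc : MeasurePreserving (MeasurableEquiv.prodAssoc : (ℝ × ℝ) × ℝ ≃ᵐ ℝ × ℝ × ℝ)
      volume volume := volume_preserving_prodAssoc
  have assocS := MeasurePreserving.symm MeasurableEquiv.prodAssoc assoc
  have c2 := ((Measure.measurePreserving_swap (μ := (volume : Measure ℝ)) (ν := volume)).prod
      (MeasurePreserving.id (volume : Measure ℝ))).comp assocS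
  have c3 := assoc.comp c2
  exact c3

lemma mpB : MeasurePreserving Bmap (volume : Measure (ℝ × ℝ × ℝ)) volume := by
  have := (mpSigma.comp mpA).comp mpSigma
  exact this

lemma map_Rmap_volume : Measure.map Rmap (volume : Measure (ℝ × ℝ × ℝ)) = volume := by
  ext s hs
  rw [Measure.map_apply measurable_Rmap hs]
  have hU : MeasurableSet {p : ℝ × ℝ × ℝ | p.2.1 < p.1} :=
    measurableSet_lt measurable_snd.fst measurable_fst
  set U : Set (ℝ × ℝ × ℝ) := {p | p.2.1 < p.1} with hUdef
  have hAeq : ∀ p : ℝ × ℝ × ℝ, p.2.1 ≤ p.1 → Rmap p = Amap p := by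
    intro p h
    have h1 : max (p.1 - p.2.1) 0 = p.1 - p.2.1 := max_eq_left (sub_nonneg.2 h)
    have h2 : max (p.2.1 - p.1) 0 = 0 := max_eq_right (sub_nonpos.2 h)
    have h3 : min p.1 p.2.1 = p.2.1 := min_eq_right h
    simp only [Rmap, Amap, h1, h2, h3, add_zero]
    exact Prod.ext (by ring) rfl
  have hBeq : ∀ p : ℝ × ℝ × ℝ, p.1 ≤ p.2.1 → Rmap p = Bmap p := by
    intro p h
    have h1 : max (p.1 - p.2.1) 0 = 0 := max_eq_right (sub_nonpos.2 h)
    have h2 : max (p.2.1 - p.1) 0 = p.2.1 - p.1 := max_eq_left (sub_nonneg.2 h)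
    have h3 : min p.1 p.2.1 = p.1 := min_eq_left h
    simp only [Rmap, Bmap, h1, h2, h3, add_zero]
    exact Prod.ext rfl (Prod.ext (by ring) rfl)
  have hAU : ∀ p : ℝ × ℝ × ℝ, Amap p ∈ U ↔ p ∈ U := by
    intro p
    simp only [hUdef, Amap, Set.mem_setOf_eq]
    constructor <;> (intro h; linarith)
  have hBU : ∀ p : ℝ × ℝ × ℝ, Bmap p ∈ Uᶜ ↔ p ∈ Uᶜ := by
    intro p
    simp only [hUdef, Bmap, Set.mem_compl_iff, Set.mem_setOf_eq, not_lt]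
    constructor <;> (intro h; linarith)
  have e1 : Rmap ⁻¹' s ∩ U = Amap ⁻¹' (s ∩ U) := by
    ext p
    simp only [Set.mem_inter_iff, Set.mem_preimage]
    constructor
    · rintro ⟨h1, h2⟩
      have hp : p.2.1 ≤ p.1 := le_of_lt h2
      exact ⟨(hAeq p hp) ▸ h1, (hAU p).2 h2⟩
    · rintro ⟨h1, h2⟩
      have h2' := (hAU p).1 h2
      exact ⟨(hAeq p (le_of_lt h2')).symm ▸ h1, h2'⟩
  have e2 : Rmap ⁻¹' s \ U = Bmap ⁻¹' (s \ U) := by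
    ext p
    simp only [Set.mem_diff, Set.mem_preimage, ← Set.mem_compl_iff]
    constructor
    · rintro ⟨h1, h2⟩
      have hp : p.1 ≤ p.2.1 := not_lt.1 h2
      exact ⟨(hBeq p hp) ▸ h1, (hBU p).2 h2⟩
    · rintro ⟨h1, h2⟩
      have h2' := (hBU p).1 h2
      exact ⟨(hBeq p (not_lt.1 h2')).symm ▸ h1, h2'⟩
  calc volume (Rmap ⁻¹' s)
      = volume (Rmap ⁻¹' s ∩ U) + volume (Rmap ⁻¹' s \ U) :=
        (measure_inter_add_diff _ hU).symm
    _ = volume (Amap ⁻¹' (s ∩ U)) + volume (Bmap ⁻¹' (s \ U)) := by rw [e1, e2]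
    _ = volume (s ∩ U) + volume (s \ U) := by
        rw [mpA.measure_preimage (hs.inter hU).nullMeasurableSet,
          mpB.measure_preimage (hs.diff hU).nullMeasurableSet]
    _ = volume s := measure_inter_add_diff s hU

lemma dens_invariance {α₁ α₂ : ℝ} (_h₁ : 0 < α₁) (_h₂ : 0 < α₂) (p : ℝ × ℝ × ℝ) :
    dens α₁ (Rmap p).1 * (dens α₂ (Rmap p).2.1 * dens (α₁ + α₂) (Rmap p).2.2)
      = dens α₁ p.1 * (dens α₂ p.2.1 * dens (α₁ + α₂) p.2.2) := by
  obtain ⟨r, s, t⟩ := p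
  rcases le_total s r with h | h
  · have e1 : Rmap (r, s, t) = (t + (r - s), t, s) := by
      have h1 : max (r - s) 0 = r - s := max_eq_left (sub_nonneg.2 h)
      have h2 : max (s - r) 0 = 0 := max_eq_right (sub_nonpos.2 h)
      have h3 : min r s = s := min_eq_right h
      simp [Rmap, h1, h2, h3]
    rw [e1]
    by_cases ht : 0 ≤ t
    · by_cases hs0 : 0 ≤ s
      · have hr0 : 0 ≤ r := le_trans hs0 h
        have hu : 0 ≤ t + (r - s) := by linarith
        simp only [dens, if_pos ht, if_pos hs0, if_pos hr0, if_pos hu]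
        have hexp : Real.exp (-α₁ * (t + (r - s))) * Real.exp (-α₂ * t) *
              Real.exp (-(α₁ + α₂) * s)
            = Real.exp (-α₁ * r) * Real.exp (-α₂ * s) * Real.exp (-(α₁ + α₂) * t) := by
          rw [← Real.exp_add, ← Real.exp_add, ← Real.exp_add, ← Real.exp_add]
          ring_nf
        linear_combination (α₁ * (α₂ * (α₁ + α₂))) * hexp
      · simp [dens, hs0]
    · simp [dens, ht]
  · have e1 : Rmap (r, s, t) = (t, t + (s - r), r) := by
      have h1 : max (r - s) 0 = 0 := max_eq_right (sub_nonpos.2 h)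
      have h2 : max (s - r) 0 = s - r := max_eq_left (sub_nonneg.2 h)
      have h3 : min r s = r := min_eq_left h
      simp [Rmap, h1, h2, h3]
    rw [e1]
    by_cases ht : 0 ≤ t
    · by_cases hr0 : 0 ≤ r
      · have hs0 : 0 ≤ s := le_trans hr0 h
        have hu : 0 ≤ t + (s - r) := by linarith
        simp only [dens, if_pos ht, if_pos hs0, if_pos hr0, if_pos hu]
        have hexp : Real.exp (-α₁ * t) * Real.exp (-α₂ * (t + (s - r))) *
              Real.exp (-(α₁ + α₂) * r)
            = Real.exp (-α₁ * r) * Real.exp (-α₂ * s) * Real.exp (-(α₁ + α₂) * t) := by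
          rw [← Real.exp_add, ← Real.exp_add, ← Real.exp_add, ← Real.exp_add]
          ring_nf
        linear_combination (α₁ * (α₂ * (α₁ + α₂))) * hexp
      · simp [dens, hr0]
    · simp [dens, ht]

lemma prod_withDensity {X Y : Type*} [MeasurableSpace X] [MeasurableSpace Y]
    (μ : Measure X) (ν : Measure Y) [SigmaFinite μ] [SigmaFinite ν]
    {f : X → ℝ≥0∞} {g : Y → ℝ≥0∞} (hf : Measurable f) (hg : Measurable g)
    [SigmaFinite (μ.withDensity f)] [SigmaFinite (ν.withDensity g)] :
    (μ.withDensity f).prod (ν.withDensity g)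
      = (μ.prod ν).withDensity (fun p => f p.1 * g p.2) := by
  refine Measure.prod_eq fun s t hs ht => ?_
  rw [withDensity_apply _ (hs.prod ht), ← Measure.prod_restrict,
    lintegral_prod_mul hf.aemeasurable hg.aemeasurable,
    withDensity_apply _ hs, withDensity_apply _ ht]

end ExpRev

open ExpRev ENNReal in
/-- **Reversibility for exponential weights:** if `μ` is the product of exponential
distributions with rates `α₁`, `α₂` and `α₁ + α₂`, then `R_* μ = μ`. -/
theorem exponential_reversibility (α₁ α₂ : ℝ) (h₁ : 0 < α₁) (h₂ : 0 < α₂) :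
    Measure.map Rmap
        ((expMeasure α₁).prod ((expMeasure α₂).prod (expMeasure (α₁ + α₂)))) =
      (expMeasure α₁).prod ((expMeasure α₂).prod (expMeasure (α₁ + α₂))) := by
  have h₃ : 0 < α₁ + α₂ := by linarith
  haveI i1 : IsProbabilityMeasure (expMeasure α₁) := isProbability_expMeasure h₁
  haveI i2 : IsProbabilityMeasure (expMeasure α₂) := isProbability_expMeasure h₂
  haveI i3 : IsProbabilityMeasure (expMeasure (α₁ + α₂)) := isProbability_expMeasure h₃
  set G : ℝ × ℝ → ℝ≥0∞ :=
    fun q => ENNReal.ofReal (dens α₂ q.1) * ENNReal.ofReal (dens (α₁ + α₂) q.2) with hGdef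
  have hGmeas : Measurable G :=
    ((measurable_dens α₂).comp measurable_fst).mul
      ((measurable_dens (α₁ + α₂)).comp measurable_snd)
  have h23 : (expMeasure α₂).prod (expMeasure (α₁ + α₂))
      = (volume : Measure (ℝ × ℝ)).withDensity G := by
    rw [expMeasure_eq, expMeasure_eq,
      prod_withDensity volume volume (measurable_dens α₂) (measurable_dens (α₁ + α₂)),
      ← Measure.volume_eq_prod]
  haveI iG : SigmaFinite ((volume : Measure (ℝ × ℝ)).withDensity G) := by
    rw [← h23]; infer_instance
  set F : ℝ × ℝ × ℝ → ℝ≥0∞ :=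
    fun p => ENNReal.ofReal (dens α₁ p.1) *
      (ENNReal.ofReal (dens α₂ p.2.1) * ENNReal.ofReal (dens (α₁ + α₂) p.2.2)) with hFdef
  have hFmeas : Measurable F :=
    ((measurable_dens α₁).comp measurable_fst).mul
      (((measurable_dens α₂).comp measurable_snd.fst).mul
        ((measurable_dens (α₁ + α₂)).comp measurable_snd.snd))
  have hμ : (expMeasure α₁).prod ((expMeasure α₂).prod (expMeasure (α₁ + α₂)))
      = (volume : Measure (ℝ × ℝ × ℝ)).withDensity F := by
    rw [h23, expMeasure_eq,
      prod_withDensity volume volume (measurable_dens α₁) hGmeas,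
      ← Measure.volume_eq_prod]
  have hFR : ∀ p : ℝ × ℝ × ℝ, F (Rmap p) = F p := by
    intro p
    have hd : ∀ (α : ℝ) (x : ℝ), 0 < α → 0 ≤ dens α x := by
      intro α x hα
      unfold dens
      split
      · positivity
      · exact le_rfl
    simp only [hFdef]
    rw [← ENNReal.ofReal_mul (hd α₂ _ h₂), ← ENNReal.ofReal_mul (hd α₁ _ h₁),
      ← ENNReal.ofReal_mul (hd α₂ _ h₂), ← ENNReal.ofReal_mul (hd α₁ _ h₁)]
    exact congrArg ENNReal.ofReal (dens_invariance h₁ h₂ p)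
  rw [hμ]
  ext s hs
  rw [Measure.map_apply measurable_Rmap hs, withDensity_apply _ (measurable_Rmap hs),
    withDensity_apply _ hs, ← lintegral_indicator (measurable_Rmap hs) _,
    ← lintegral_indicator hs _]
  have hind : (Rmap ⁻¹' s).indicator F = fun x => (s.indicator F) (Rmap x) := by
    funext x
    by_cases hx : Rmap x ∈ s
    · rw [Set.indicator_of_mem hx, Set.indicator_of_mem (by exact hx), hFR x]
    · rw [Set.indicator_of_notMem hx, Set.indicator_of_notMem (by exact hx)]
  rw [hind, ← lintegral_map (hFmeas.indicator hs) measurable_Rmap, map_Rmap_volume]
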